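/- If A ⊂ ℤ is a g-difference set for [N], then the function f: ℝ → ℝ defined by f(x) = √(N/g) if a/N ≤ x < (a+1)/N for some a ∈ A and f(x) = 0 otherwise, satisfies: (1) ∫_ℝ f = |A|/√(gN), and (2) the autocorrelation (f⋆f)(x) = ∫_ℝ f(t)f(x+t) dt is at least 1 for all x ∈ [0,1]. -/

import Mathlib

open MeasureTheory

lemma aux_integrable (l r e : ℝ) : Integrable ((Set.Ico l r).indicator (fun _ => e)) := by
  rw [integrable_indicator_iff measurableSet_Ico]
  exact integrableOn_const measure_Ico_lt_top.ne

lemma aux_integral (l r e : ℝ) :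
    (∫ x, (Set.Ico l r).indicator (fun _ => e) x) = max (r - l) 0 * e := by
  rw [integral_indicator_const e measurableSet_Ico, measureReal_def, Real.volume_Ico,
    ENNReal.toReal_ofReal', smul_eq_mul]

theorem stmt9 (g N : ℕ) (hg : 0 < g) (hN : 0 < N) (A : Finset ℤ)
    (hA : ∀ m : ℤ, 1 ≤ m → m ≤ (N : ℤ) →
      g ≤ ((A ×ˢ A).filter (fun p => p.1 - p.2 = m)).card)
    (f : ℝ → ℝ)
    (hf : f = Set.indicator (⋃ a ∈ A, Set.Ico ((a : ℝ) / N) (((a : ℝ) + 1) / N))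
      (fun _ => Real.sqrt ((N : ℝ) / g))) :
    (∫ x, f x) = (A.card : ℝ) / Real.sqrt (g * N) ∧
    ∀ x ∈ Set.Icc (0 : ℝ) 1, 1 ≤ ∫ t, f t * f (x + t) := by
  subst hf
  have hN0 : (0:ℝ) < N := by exact_mod_cast hN
  have hg0 : (0:ℝ) < g := by exact_mod_cast hg
  set c : ℝ := Real.sqrt ((N:ℝ)/g) with hc
  have hcc : c * c = (N:ℝ)/g := Real.mul_self_sqrt (by positivity)
  have hsn : Real.sqrt ((g:ℝ)*N) ≠ 0 := by positivity
  have hs : Real.sqrt ((g:ℝ)*N) * c = N := by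
    rw [hc, ← Real.sqrt_mul (by positivity), show (g:ℝ)*N*((N:ℝ)/g) = N*N by
      field_simp]
    exact Real.sqrt_mul_self hN0.le
  -- intervals
  have hdisj : (↑A : Set ℤ).PairwiseDisjoint
      (fun a : ℤ => Set.Ico ((a:ℝ)/N) (((a:ℝ)+1)/N)) := by
    have key : ∀ a b : ℤ, a < b →
        Disjoint (Set.Ico ((a:ℝ)/N) (((a:ℝ)+1)/N)) (Set.Ico ((b:ℝ)/N) (((b:ℝ)+1)/N)) := by
      intro a b hab
      rw [Set.Ico_disjoint_Ico]
      have h1 : (a:ℝ) + 1 ≤ b := by exact_mod_cast hab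
      calc min (((a:ℝ)+1)/N) (((b:ℝ)+1)/N) ≤ ((a:ℝ)+1)/N := min_le_left _ _
        _ ≤ (b:ℝ)/N := by gcongr
        _ ≤ max ((a:ℝ)/N) ((b:ℝ)/N) := le_max_right _ _
    intro a _ b _ hab
    rcases hab.lt_or_gt with h | h
    · exact key a b h
    · exact (key b a h).symm
  have hpt : ∀ t : ℝ,
      Set.indicator (⋃ a ∈ A, Set.Ico ((a : ℝ) / N) (((a : ℝ) + 1) / N)) (fun _ => c) t
        = ∑ a ∈ A, (Set.Ico ((a:ℝ)/N) (((a:ℝ)+1)/N)).indicator (fun _ => c) t :=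
    fun t => Finset.indicator_biUnion_apply A _ hdisj t
  constructor
  · have h1 : (fun t => Set.indicator (⋃ a ∈ A, Set.Ico ((a : ℝ) / N) (((a : ℝ) + 1) / N))
        (fun _ => c) t)
        = fun t => ∑ a ∈ A, (Set.Ico ((a:ℝ)/N) (((a:ℝ)+1)/N)).indicator (fun _ => c) t :=
      funext hpt
    rw [h1, integral_finset_sum _ (fun a _ => aux_integrable _ _ _)]
    have h2 : ∀ a ∈ A, (∫ t, (Set.Ico ((a:ℝ)/N) (((a:ℝ)+1)/N)).indicator (fun _ => c) t)
        = 1 / Real.sqrt ((g:ℝ)*N) := by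
      intro a _
      rw [aux_integral, show ((a:ℝ)+1)/N - (a:ℝ)/N = 1/N by ring,
        max_eq_left (by positivity)]
      rw [div_mul_eq_mul_div, one_mul, div_eq_div_iff hN0.ne' hsn, one_mul, mul_comm]
      exact hs
    rw [Finset.sum_congr rfl h2, Finset.sum_const, nsmul_eq_mul, mul_one_div]
  · intro x hx
    obtain ⟨hx0, hx1⟩ := hx
    have shift : ∀ (l r t : ℝ), (Set.Ico l r).indicator (fun _ => c) (x+t)
        = (Set.Ico (l - x) (r - x)).indicator (fun _ => c) t := by
      intro l r t
      simp only [Set.indicator_apply, Set.mem_Ico]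
      congr 1
      rw [eq_iff_iff]
      constructor
      · rintro ⟨h1, h2⟩; exact ⟨by linarith, by linarith⟩
      · rintro ⟨h1, h2⟩; exact ⟨by linarith, by linarith⟩
    set val : ℤ × ℤ → ℝ := fun p =>
      max (min (((p.1:ℝ)+1)/N) (((p.2:ℝ)+1)/N - x) - max ((p.1:ℝ)/N) ((p.2:ℝ)/N - x)) 0
        * (c*c) with hval
    have key : (fun t => Set.indicator (⋃ a ∈ A, Set.Ico ((a : ℝ) / N) (((a : ℝ) + 1) / N))
          (fun _ => c) t *
        Set.indicator (⋃ a ∈ A, Set.Ico ((a : ℝ) / N) (((a : ℝ) + 1) / N))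
          (fun _ => c) (x + t))
        = fun t => ∑ p ∈ A ×ˢ A,
            (Set.Ico (max ((p.1:ℝ)/N) ((p.2:ℝ)/N - x))
              (min (((p.1:ℝ)+1)/N) (((p.2:ℝ)+1)/N - x))).indicator (fun _ => c*c) t := by
      funext t
      rw [hpt t, hpt (x+t), Finset.sum_mul_sum, ← Finset.sum_product']
      refine Finset.sum_congr rfl (fun p _ => ?_)
      rw [shift, ← Set.inter_indicator_mul, Set.Ico_inter_Ico]
    have hintcalc : (∫ t, Set.indicator (⋃ a ∈ A, Set.Ico ((a : ℝ) / N) (((a : ℝ) + 1) / N))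
          (fun _ => c) t *
        Set.indicator (⋃ a ∈ A, Set.Ico ((a : ℝ) / N) (((a : ℝ) + 1) / N))
          (fun _ => c) (x + t)) = ∑ p ∈ A ×ˢ A, val p := by
      rw [key, integral_finset_sum _ (fun p _ => aux_integrable _ _ _)]
      exact Finset.sum_congr rfl (fun p _ => aux_integral _ _ _)
    rw [hintcalc]
    -- floor decomposition
    set j : ℤ := ⌊(N:ℝ)*x⌋ with hj
    set θ : ℝ := Int.fract ((N:ℝ)*x) with hθ
    have hNx : (N:ℝ)*x = (j:ℝ) + θ := by rw [hj, hθ]; exact (Int.floor_add_fract _).symm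
    have hθ0 : 0 ≤ θ := Int.fract_nonneg _
    have hθ1 : θ < 1 := Int.fract_lt_one _
    have hxval : x = ((j:ℝ) + θ)/N := by field_simp [mul_comm] at hNx ⊢; linarith
    have hj0 : 0 ≤ j := Int.floor_nonneg.2 (by positivity)
    have hjN : j ≤ (N:ℤ) := by
      have : (j:ℝ) ≤ (N:ℝ) := by
        have h2 : (N:ℝ)*x ≤ N := by nlinarith
        linarith [hNx, hθ0]
      exact_mod_cast this
    set T : ℤ → Finset (ℤ × ℤ) := fun m => (A ×ˢ A).filter (fun p => p.2 - p.1 = m) with hT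
    have hswap : ∀ m : ℤ, (T m).card = ((A ×ˢ A).filter (fun p => p.1 - p.2 = m)).card := by
      intro m
      apply Finset.card_bij' (fun p _ => Prod.swap p) (fun p _ => Prod.swap p)
      · intro p hp
        simp only [hT, Finset.mem_filter, Finset.mem_product] at hp ⊢
        exact ⟨⟨hp.1.2, hp.1.1⟩, hp.2⟩
      · intro p hp
        simp only [hT, Finset.mem_filter, Finset.mem_product] at hp ⊢
        exact ⟨⟨hp.1.2, hp.1.1⟩, hp.2⟩
      · intro p _; simp
      · intro p _; simp
    have hcardT : ∀ m : ℤ, 1 ≤ m → m ≤ (N:ℤ) → (g:ℝ) ≤ (T m).card := by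
      intro m h1 h2
      rw [hswap m]
      exact_mod_cast hA m h1 h2
    have hT0 : (T 0).card = A.card := by
      have : T 0 = A.image (fun a => (a, a)) := by
        ext p
        simp only [hT, Finset.mem_filter, Finset.mem_product, Finset.mem_image, sub_eq_zero]
        constructor
        · rintro ⟨⟨h1, h2⟩, h3⟩
          exact ⟨p.2, h2, Prod.ext h3 rfl⟩
        · rintro ⟨a, ha, rfl⟩
          exact ⟨⟨ha, ha⟩, rfl⟩
      rw [this, Finset.card_image_of_injective _ (fun a b h => by simpa using congrArg Prod.fst h)]
    have hAg : (g:ℝ) ≤ A.card := by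
      have h1 : (g:ℝ) ≤ (T 1).card := hcardT 1 le_rfl (by exact_mod_cast hN)
      have h2 : (T 1).card ≤ A.card := by
        apply Finset.card_le_card_of_injOn (fun p => p.1)
        · intro p hp
          simp only [hT, Finset.mem_coe, Finset.mem_filter, Finset.mem_product] at hp
          exact hp.1.1
        · intro p hp q hq hpq
          rw [Finset.mem_coe, hT] at hp hq
          simp only [Finset.mem_filter] at hp hq
          obtain ⟨-, e1⟩ := hp
          obtain ⟨-, e2⟩ := hq
          have hpq' : p.1 = q.1 := hpq
          exact Prod.ext hpq' (by omega)
      calc (g:ℝ) ≤ (T 1).card := h1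
        _ ≤ A.card := by exact_mod_cast h2
    -- value on T j and T (j+1)
    have hvalj : ∀ p ∈ T j, val p = (1 - θ)/g := by
      intro p hp
      simp only [hT, Finset.mem_filter] at hp
      have h2 : (p.2:ℝ) = (p.1:ℝ) + (j:ℝ) := by
        have := hp.2; push_cast [show p.2 = p.1 + j by omega]; ring
      rw [hval]
      simp only
      rw [show ((p.2:ℝ)+1)/N - x = ((p.1:ℝ) + 1 - θ)/N by rw [hxval, h2]; ring,
        show (p.2:ℝ)/N - x = ((p.1:ℝ) - θ)/N by rw [hxval, h2]; ring,
        max_eq_left ((div_le_div_iff_of_pos_right hN0).2 (by linarith)),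
        min_eq_right ((div_le_div_iff_of_pos_right hN0).2 (by linarith)),
        show ((p.1:ℝ) + 1 - θ)/N - (p.1:ℝ)/N = (1-θ)/N by ring,
        max_eq_left (div_nonneg (by linarith) hN0.le), hcc]
      field_simp
    have hvalj1 : ∀ p ∈ T (j+1), val p = θ/g := by
      intro p hp
      simp only [hT, Finset.mem_filter] at hp
      have h2 : (p.2:ℝ) = (p.1:ℝ) + (j:ℝ) + 1 := by
        have := hp.2; push_cast [show p.2 = p.1 + j + 1 by omega]; ring
      rw [hval]
      simp only
      rw [show ((p.2:ℝ)+1)/N - x = ((p.1:ℝ) + 2 - θ)/N by rw [hxval, h2]; ring,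
        show (p.2:ℝ)/N - x = ((p.1:ℝ) + 1 - θ)/N by rw [hxval, h2]; ring,
        max_eq_right ((div_le_div_iff_of_pos_right hN0).2 (by linarith)),
        min_eq_left ((div_le_div_iff_of_pos_right hN0).2 (by linarith)),
        show ((p.1:ℝ) + 1)/N - ((p.1:ℝ) + 1 - θ)/N = θ/N by ring,
        max_eq_left (div_nonneg hθ0 hN0.le), hcc]
      field_simp
    -- lower bound
    have hsub : T j ∪ T (j+1) ⊆ A ×ˢ A := by
      apply Finset.union_subset <;> exact Finset.filter_subset _ _
    have hdisjT : Disjoint (T j) (T (j+1)) := by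
      rw [hT]
      rw [Finset.disjoint_filter]
      intro p _ h1 h2
      omega
    have hnn : ∀ p ∈ A ×ˢ A, p ∉ T j ∪ T (j+1) → 0 ≤ val p := by
      intro p _ _
      exact mul_nonneg (le_max_right _ 0) (mul_self_nonneg c)
    have step1 : ∑ p ∈ T j ∪ T (j+1), val p ≤ ∑ p ∈ A ×ˢ A, val p :=
      Finset.sum_le_sum_of_subset_of_nonneg hsub hnn
    rw [Finset.sum_union hdisjT, Finset.sum_congr rfl hvalj, Finset.sum_congr rfl hvalj1,
      Finset.sum_const, Finset.sum_const, nsmul_eq_mul, nsmul_eq_mul] at step1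
    have b1 : (g:ℝ) ≤ (T j).card := by
      rcases eq_or_lt_of_le hj0 with h | h
      · rw [← h, hT0]; exact hAg
      · exact hcardT j (by omega) hjN
    have b2 : (g:ℝ)*θ ≤ (T (j+1)).card * θ := by
      rcases eq_or_lt_of_le hθ0 with h | h
      · rw [← h]; simp
      · have hjN' : j + 1 ≤ (N:ℤ) := by
          have : (j:ℝ) < (N:ℝ)*x := by linarith [hNx]
          have h2 : (N:ℝ)*x ≤ N := by nlinarith
          have : (j:ℝ) < (N:ℝ) := by linarith
          have : j < (N:ℤ) := by exact_mod_cast this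
          omega
        exact mul_le_mul_of_nonneg_right (hcardT (j+1) (by omega) hjN') hθ0
    have b1' : (g:ℝ)*(1-θ) ≤ (T j).card * (1-θ) :=
      mul_le_mul_of_nonneg_right b1 (by linarith)
    calc (1:ℝ) = ((g:ℝ)*(1-θ) + (g:ℝ)*θ)/g := by field_simp; ring
      _ ≤ ((T j).card * (1-θ) + (T (j+1)).card * θ)/g := by
          exact (div_le_div_iff_of_pos_right hg0).2 (add_le_add b1' b2)
      _ = (T j).card * ((1-θ)/g) + (T (j+1)).card * (θ/g) := by ring
      _ ≤ ∑ p ∈ A ×ˢ A, val p := step1
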